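/- Every rational solution r(t) ∈ ℚ(t) (or k(t), k algebraically closed of characteristic 0) of the ODE t·y·y' + y³ + 1 = 0 is a constant c satisfying c³ + 1 = 0. -/

import Mathlib

open Polynomial

noncomputable def degR {k : Type*} [Field k] (r : RatFunc k) : ℕ :=
  max r.num.natDegree r.denom.natDegree

noncomputable def rderiv {k : Type*} [Field k] (r : RatFunc k) : RatFunc k :=
  (algebraMap (Polynomial k) (RatFunc k) (Polynomial.derivative r.num) *
      algebraMap (Polynomial k) (RatFunc k) r.denom -
    algebraMap (Polynomial k) (RatFunc k) r.num *
      algebraMap (Polynomial k) (RatFunc k) (Polynomial.derivative r.denom)) /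
  (algebraMap (Polynomial k) (RatFunc k) r.denom) ^ 2

/-- Clearing denominators in the ODE gives a polynomial identity. -/
theorem key_eq_aux17 {k : Type*} [Field k] (r : RatFunc k)
    (hsol : RatFunc.X * r * rderiv r + r ^ 3 + 1 = 0) :
    X * r.num * (derivative r.num * r.denom - r.num * derivative r.denom)
      + r.num ^ 3 + r.denom ^ 3 = 0 := by
  set φ := algebraMap (Polynomial k) (RatFunc k) with hφ
  have hq : φ r.denom ≠ 0 := by
    simpa [hφ] using r.denom_ne_zero
  have hsol2 : RatFunc.X * (φ r.num / φ r.denom) *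
      ((φ (derivative r.num) * φ r.denom - φ r.num * φ (derivative r.denom)) / (φ r.denom) ^ 2)
      + (φ r.num / φ r.denom) ^ 3 + 1 = 0 := by
    rw [RatFunc.num_div_denom]; exact hsol
  field_simp at hsol2
  have h3 : φ (X * r.num * (derivative r.num * r.denom - r.num * derivative r.denom)
      + r.num ^ 3 + r.denom ^ 3) * φ r.denom ^ 3 = 0 := by
    push_cast [hφ, map_add, map_mul, map_sub, map_pow, RatFunc.algebraMap_X]
    linear_combination (φ r.denom) ^ 3 * hsol2
  have h4 := (mul_eq_zero.mp h3).resolve_right (pow_ne_zero 3 hq)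
  apply IsFractionRing.injective (Polynomial k) (RatFunc k)
  simpa [hφ] using h4

/-- The polynomial identity forces `p` constant and `q = 1`. -/
theorem poly_part_aux17 {k : Type*} [Field k] (p q : k[X]) (hmon : q.Monic)
    (hcop : IsCoprime p q)
    (key : X * p * (derivative p * q - p * derivative q) + p ^ 3 + q ^ 3 = 0) :
    ∃ c : k, p = C c ∧ q = 1 ∧ c ^ 3 + 1 = 0 := by
  have hdvd : p ∣ q ^ 3 := ⟨-(X * (derivative p * q - p * derivative q) + p ^ 2),
    by linear_combination key⟩
  have hu : IsUnit p := (hcop.pow_right).isUnit_of_dvd hdvd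
  obtain ⟨c, hcu, hp⟩ := Polynomial.isUnit_iff.mp hu
  subst hp
  simp only [derivative_C, zero_mul, zero_sub, mul_one] at key
  have hd0 : q.natDegree = 0 := by
    by_contra hd
    have hd1 : 1 ≤ q.natDegree := Nat.one_le_iff_ne_zero.mpr hd
    have e : q ^ 3 = X * C (c ^ 2) * derivative q - C (c ^ 3) := by
      simp only [map_pow]
      linear_combination key
    have h1 : (X * C (c ^ 2) * derivative q - C (c ^ 3)).natDegree ≤ q.natDegree := by
      refine le_trans (natDegree_sub_le _ _) ?_
      simp only [natDegree_C, max_le_iff]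
      constructor
      · refine le_trans (natDegree_mul_le) ?_
        have h2 : (derivative q).natDegree ≤ q.natDegree - 1 := natDegree_derivative_le q
        have h3 : (X * C (c ^ 2)).natDegree ≤ 1 := by
          refine le_trans (natDegree_mul_le) ?_
          simp
        omega
      · omega
    rw [← e, natDegree_pow] at h1
    omega
  have hq1 : q = 1 := hmon.natDegree_eq_zero.mp hd0
  subst hq1
  simp only [derivative_one, mul_zero, sub_zero, mul_one, one_pow, neg_zero, mul_neg] at key
  refine ⟨c, rfl, rfl, ?_⟩
  have : C (c ^ 3 + 1) = 0 := by
    simp only [map_add, map_pow, map_one]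
    linear_combination key
  simpa using (C_eq_zero.mp this)

theorem stmt_17 {k : Type*} [Field k] [IsAlgClosed k] [CharZero k]
    (r : RatFunc k)
    (hsol : RatFunc.X * r * rderiv r + r ^ 3 + 1 = 0) :
    ∃ c : k, r = RatFunc.C c ∧ c ^ 3 + 1 = 0 := by
  obtain ⟨c, hp, hq, hc⟩ := poly_part_aux17 r.num r.denom r.monic_denom
    r.isCoprime_num_denom (key_eq_aux17 r hsol)
  refine ⟨c, ?_, hc⟩
  rw [← RatFunc.num_div_denom r, hp, hq, map_one, div_one, RatFunc.algebraMap_C]
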